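/- Let G be a simple graph with pairwise disjoint vertex sets H₁, …, H_m such that each G[H_i] is connected, and let G' be the graph obtained from G by contracting each H_i to a single vertex (keeping the remaining vertices and all edges between distinct parts, without multiplicities). If G' contains a cycle of length at least k, then G contains a cycle of length at least k that is not contained in any single H_i. -/

import Mathlib

open SimpleGraph

private lemma aux_edge_start {V : Type*} {G : SimpleGraph V} {u v x : V}
    (p : G.Walk u v) (hp : p.IsPath) (hx : s(u, x) ∈ p.edges) :
    ∃ (h : G.Adj u x) (q : G.Walk x v), p = Walk.cons h q := by
  cases p with
  | nil => simp at hx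
  | cons h q =>
    rename_i w
    rw [Walk.edges_cons, List.mem_cons] at hx
    rcases hx with hx | hx
    · rw [Sym2.eq_iff] at hx
      rcases hx with ⟨-, rfl⟩ | ⟨rfl, rfl⟩
      · exact ⟨h, q, rfl⟩
      · exact absurd rfl h.ne
    · exfalso
      have := Walk.fst_mem_support_of_mem_edges q hx
      rw [Walk.cons_isPath_iff] at hp
      exact hp.2 this

private lemma aux_isCycle {V : Type*} {G : SimpleGraph V} {a : V}
    (C : G.Walk a a) (h1 : C.support.tail.Nodup) (h2 : 3 ≤ C.length) : C.IsCycle := by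
  cases C with
  | nil => simp at h2
  | cons h p =>
    rename_i b
    rw [Walk.support_cons, List.tail_cons] at h1
    have hp : p.IsPath := Walk.isPath_def _ |>.mpr h1
    rw [Walk.cons_isCycle_iff]
    refine ⟨hp, fun he => ?_⟩
    have he' : s(a, b) ∈ p.reverse.edges := by
      rw [Walk.edges_reverse, List.mem_reverse]; exact he
    obtain ⟨h', q, hq⟩ := aux_edge_start p.reverse hp.reverse he'
    have hqnil : q.Nil := by
      cases q with
      | nil => exact Walk.Nil.nil
      | cons h'' q' =>
        exfalso
        have hrp : p.reverse.IsPath := hp.reverse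
        rw [hq, Walk.cons_isPath_iff, Walk.cons_isPath_iff] at hrp
        exact hrp.1.2 (Walk.end_mem_support q')
    have : p.reverse.length = 1 := by
      rw [hq, Walk.length_cons, Walk.nil_iff_length_eq.mp hqnil]
    rw [Walk.length_reverse] at this
    rw [Walk.length_cons, this] at h2
    omega

private def auxFiber {V : Type*} {m : ℕ} (H : Fin m → Set V) :
    (Fin m ⊕ {v : V // ∀ i, v ∉ H i}) → Set V
  | Sum.inl i => H i
  | Sum.inr v => {v.1}

section
variable {V : Type*} {G : SimpleGraph V} {m : ℕ} {H : Fin m → Set V}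
  {G' : SimpleGraph (Fin m ⊕ {v : V // ∀ i, v ∉ H i})}

private lemma aux_fiber_eq (hdisj : ∀ i j, i ≠ j → H i ∩ H j = ∅)
    {s t : Fin m ⊕ {v : V // ∀ i, v ∉ H i}} {v : V}
    (hs : v ∈ auxFiber H s) (ht : v ∈ auxFiber H t) : s = t := by
  cases s with
  | inl i =>
    cases t with
    | inl j =>
      by_contra hne
      have hij : i ≠ j := fun h => hne (by rw [h])
      have := hdisj i j hij
      have hmem : v ∈ H i ∩ H j := Set.mem_inter hs ht
      rw [this] at hmem
      exact Set.notMem_empty v hmem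
    | inr w =>
      exfalso
      have : v = w.1 := ht
      exact w.2 i (this ▸ hs)
  | inr w =>
    cases t with
    | inl j =>
      exfalso
      have : v = w.1 := hs
      exact w.2 j (this ▸ ht)
    | inr w' =>
      have h1 : v = w.1 := hs
      have h2 : v = w'.1 := ht
      congr 1
      exact Subtype.ext (h1 ▸ h2)

private lemma aux_connect (hconn : ∀ i, (G.induce (H i)).Connected)
    (s : Fin m ⊕ {v : V // ∀ i, v ∉ H i}) {a b : V}
    (ha : a ∈ auxFiber H s) (hb : b ∈ auxFiber H s) :
    ∃ Q : G.Walk a b, Q.support.Nodup ∧ ∀ v ∈ Q.support, v ∈ auxFiber H s := by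
  cases s with
  | inr w =>
    have h1 : a = w.1 := ha
    have h2 : b = w.1 := hb
    subst h1
    cases h2
    exact ⟨Walk.nil, by simp, by simp [ha]⟩
  | inl i =>
    obtain ⟨W⟩ := (hconn i) ⟨a, ha⟩ ⟨b, hb⟩
    classical
    let P := W.toPath
    let Q := Walk.map (Embedding.induce (H i)).toHom P.1
    refine ⟨Q, ?_, ?_⟩
    · have : Q.IsPath := Walk.map_isPath_of_injective (Subtype.val_injective) P.2
      exact this.support_nodup
    · intro v hv
      change v ∈ (Walk.map (Embedding.induce (H i)).toHom P.1).support at hv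
      rw [Walk.support_map, List.mem_map] at hv
      obtain ⟨⟨v', hv'⟩, -, rfl⟩ := hv
      exact hv'

private lemma aux_witness
    (hadj₁ : ∀ i j : Fin m, G'.Adj (Sum.inl i) (Sum.inl j) ↔
      (i ≠ j ∧ ∃ a ∈ H i, ∃ b ∈ H j, G.Adj a b))
    (hadj₂ : ∀ (i : Fin m) (v : {v : V // ∀ i, v ∉ H i}),
      G'.Adj (Sum.inl i) (Sum.inr v) ↔ ∃ a ∈ H i, G.Adj a v.1)
    (hadj₃ : ∀ v w : {v : V // ∀ i, v ∉ H i},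
      G'.Adj (Sum.inr v) (Sum.inr w) ↔ G.Adj v.1 w.1)
    {s t : Fin m ⊕ {v : V // ∀ i, v ∉ H i}} (h : G'.Adj s t) :
    ∃ a ∈ auxFiber H s, ∃ b ∈ auxFiber H t, G.Adj a b := by
  cases s with
  | inl i =>
    cases t with
    | inl j =>
      obtain ⟨-, a, ha, b, hb, hab⟩ := (hadj₁ i j).mp h
      exact ⟨a, ha, b, hb, hab⟩
    | inr w =>
      obtain ⟨a, ha, hab⟩ := (hadj₂ i w).mp h
      exact ⟨a, ha, w.1, rfl, hab⟩
  | inr w =>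
    cases t with
    | inl j =>
      obtain ⟨a, ha, hab⟩ := (hadj₂ j w).mp h.symm
      exact ⟨w.1, rfl, a, ha, hab.symm⟩
    | inr w' =>
      exact ⟨w.1, rfl, w'.1, rfl, (hadj₃ w w').mp h⟩

private lemma aux_lift
    (hdisj : ∀ i j, i ≠ j → H i ∩ H j = ∅)
    (hconn : ∀ i, (G.induce (H i)).Connected)
    (hadj₁ : ∀ i j : Fin m, G'.Adj (Sum.inl i) (Sum.inl j) ↔
      (i ≠ j ∧ ∃ a ∈ H i, ∃ b ∈ H j, G.Adj a b))
    (hadj₂ : ∀ (i : Fin m) (v : {v : V // ∀ i, v ∉ H i}),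
      G'.Adj (Sum.inl i) (Sum.inr v) ↔ ∃ a ∈ H i, G.Adj a v.1)
    (hadj₃ : ∀ v w : {v : V // ∀ i, v ∉ H i},
      G'.Adj (Sum.inr v) (Sum.inr w) ↔ G.Adj v.1 w.1) :
    ∀ {p q : Fin m ⊕ {v : V // ∀ i, v ∉ H i}} (W : G'.Walk p q)
      (_hW : W.support.Nodup) (a : V) (_ha : a ∈ auxFiber H p),
    ∃ b ∈ auxFiber H q, ∃ P : G.Walk a b, P.support.Nodup ∧ W.length ≤ P.length ∧
      ∀ v ∈ P.support, (∃ s ∈ W.support, v ∈ auxFiber H s) ∧ (v ∈ auxFiber H q → v = b) := by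
  intro p q W
  induction W with
  | nil =>
    intro _ a ha
    refine ⟨a, ha, Walk.nil, by simp, by simp, ?_⟩
    intro v hv
    rw [Walk.support_nil, List.mem_singleton] at hv
    subst hv
    exact ⟨⟨_, by simp, ha⟩, fun _ => rfl⟩
  | cons h W' ih =>
    rename_i p t q
    intro hW a ha
    rw [Walk.support_cons, List.nodup_cons] at hW
    obtain ⟨hpW', hW'⟩ := hW
    obtain ⟨a', ha', b', hb', hab⟩ := aux_witness hadj₁ hadj₂ hadj₃ h
    obtain ⟨Q, hQnd, hQmem⟩ := aux_connect hconn p ha ha'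
    obtain ⟨c, hc, P', hP'nd, hP'len, hP'mem⟩ := ih hW' b' hb'
    refine ⟨c, hc, Q.append (Walk.cons hab P'), ?_, ?_, ?_⟩
    · rw [Walk.support_append, List.nodup_append]
      refine ⟨hQnd, ?_, ?_⟩
      · rw [Walk.support_cons, List.tail_cons]
        exact hP'nd
      · intro v hvQ w hvP hvw
        rw [← hvw] at hvP
        rw [Walk.support_cons, List.tail_cons] at hvP
        obtain ⟨⟨s, hs, hvs⟩, -⟩ := hP'mem v hvP
        have hps : p = s := aux_fiber_eq hdisj (hQmem v hvQ) hvs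
        exact hpW' (hps ▸ hs)
    · rw [Walk.length_append, Walk.length_cons, Walk.length_cons]
      omega
    · intro v hv
      rw [Walk.mem_support_append_iff] at hv
      rcases hv with hv | hv
      · have hvp := hQmem v hv
        constructor
        · exact ⟨p, by simp, hvp⟩
        · intro hvq
          exfalso
          have hpq : p = q := aux_fiber_eq hdisj hvp hvq
          exact hpW' (hpq ▸ Walk.end_mem_support W')
      · rw [Walk.support_cons, List.mem_cons] at hv
        rcases hv with heq | hv
        · have hvp : v ∈ auxFiber H p := by rw [heq]; exact ha'
          refine ⟨⟨p, by simp, hvp⟩, fun hvq => ?_⟩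
          exfalso
          have hpq : p = q := aux_fiber_eq hdisj hvp hvq
          exact hpW' (hpq ▸ Walk.end_mem_support W')
        · obtain ⟨⟨s, hs, hvs⟩, h2⟩ := hP'mem v hv
          exact ⟨⟨s, by simp [hs], hvs⟩, h2⟩

end

/-- Let `H₁, …, H_m` be pairwise disjoint vertex sets of `G`, each inducing a
connected subgraph, and let `G'` be the simple graph obtained by contracting each
`H i` to a single vertex (keeping the remaining vertices, edges inherited from `G`
without multiplicities). If `G'` contains a cycle of length at least `k`, then `G`
contains a cycle of length at least `k` not contained in any single `H i`. -/
theorem stmt_15 {V : Type*} (G : SimpleGraph V) (k m : ℕ)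
    (H : Fin m → Set V)
    (hdisj : ∀ i j, i ≠ j → H i ∩ H j = ∅)
    (hconn : ∀ i, (G.induce (H i)).Connected)
    (G' : SimpleGraph (Fin m ⊕ {v : V // ∀ i, v ∉ H i}))
    (hadj₁ : ∀ i j : Fin m, G'.Adj (Sum.inl i) (Sum.inl j) ↔
      (i ≠ j ∧ ∃ a ∈ H i, ∃ b ∈ H j, G.Adj a b))
    (hadj₂ : ∀ (i : Fin m) (v : {v : V // ∀ i, v ∉ H i}),
      G'.Adj (Sum.inl i) (Sum.inr v) ↔ ∃ a ∈ H i, G.Adj a v.1)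
    (hadj₃ : ∀ v w : {v : V // ∀ i, v ∉ H i},
      G'.Adj (Sum.inr v) (Sum.inr w) ↔ G.Adj v.1 w.1)
    (x : Fin m ⊕ {v : V // ∀ i, v ∉ H i}) (c' : G'.Walk x x)
    (hc' : c'.IsCycle) (hk' : k ≤ c'.length) :
    ∃ (u : V) (c : G.Walk u u), c.IsCycle ∧ k ≤ c.length ∧
      ¬∃ i : Fin m, ∀ v ∈ c.support, v ∈ H i := by
  have h3 : 3 ≤ c'.length := hc'.three_le_length
  cases c' with
  | nil => simp at h3
  | cons h W =>
    rename_i r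
    have hW : W.support.Nodup := by
      have := hc'.support_nodup
      rwa [Walk.support_cons, List.tail_cons] at this
    obtain ⟨a, ha, b, hb, hab⟩ := aux_witness hadj₁ hadj₂ hadj₃ h
    obtain ⟨c, hcx, P, hPnd, hPlen, hPmem⟩ :=
      aux_lift hdisj hconn hadj₁ hadj₂ hadj₃ W hW b hb
    obtain ⟨Q, hQnd, hQmem⟩ := aux_connect hconn x hcx ha
    refine ⟨a, Walk.cons hab (P.append Q), ?_, ?_, ?_⟩
    case refine_2 =>
      rw [Walk.length_cons] at hk' ⊢
      rw [Walk.length_append]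
      omega
    case refine_1 =>
      apply aux_isCycle
      · rw [Walk.support_cons, List.tail_cons, Walk.support_append, List.nodup_append]
        refine ⟨hPnd, ?_, ?_⟩
        · rcases List.nodup_cons.mp (Q.support_eq_cons ▸ hQnd) with ⟨-, htl⟩
          exact htl
        · intro v hvP w hvQt hvw
          rw [← hvw] at hvQt
          have hvQ : v ∈ Q.support := by
            rw [Q.support_eq_cons]
            exact List.mem_cons_of_mem _ hvQt
          have hvx : v ∈ auxFiber H x := hQmem v hvQ
          have hvc : v = c := (hPmem v hvP).2 hvx
          rcases List.nodup_cons.mp (Q.support_eq_cons ▸ hQnd) with ⟨hcnt, -⟩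
          exact hcnt (hvc ▸ hvQt)
      · rw [Walk.length_cons] at h3 ⊢
        rw [Walk.length_append]
        omega
    case refine_3 =>
      rintro ⟨i, hall⟩
      have haS : a ∈ (Walk.cons hab (P.append Q)).support := Walk.start_mem_support _
      have hbS : b ∈ (Walk.cons hab (P.append Q)).support := by
        rw [Walk.support_cons]
        refine List.mem_cons_of_mem _ ?_
        rw [Walk.mem_support_append_iff]
        exact Or.inl (Walk.start_mem_support P)
      have hx : x = Sum.inl i :=
        aux_fiber_eq hdisj ha (hall a haS : a ∈ auxFiber H (Sum.inl i))
      have hr : r = Sum.inl i :=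
        aux_fiber_eq hdisj hb (hall b hbS : b ∈ auxFiber H (Sum.inl i))
      exact h.ne (hx.trans hr.symm)
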